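/- arXiv:2411.06092 — 5 statements merged into one kernel-verified Lean document; each statement's English description precedes it below -/
import Mathlib

section
/- Let $\kappa_0>2$, $0<\epsilon\le\alpha<1$, $0<\kappa<\kappa_0$, and set $a=8(\kappa+1)/\alpha$. For $0\le\rho<r$ define $\Phi(r)=e^{ar^{\alpha}}/(r^{2\kappa+2}-\rho^{2\kappa+2})$. Then there exists $r_0>0$ depending only on $\epsilon$ such that $\Phi'(r)\le 0$ for all $0\le\rho<r<r_0$ with $\rho/r\le 1/\sqrt{2}$. -/
/-- `Φ(r) = e^{a r^α} / (r^{2κ+2} - ρ^{2κ+2})`. -/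
noncomputable def Phi (a α κ ρ : ℝ) (r : ℝ) : ℝ :=
  Real.exp (a * r ^ α) / (r ^ (2 * κ + 2) - ρ ^ (2 * κ + 2))

/-- There exists `r0 > 0` depending only on `ε` such that `Φ'(r) ≤ 0`
for all `0 ≤ ρ < r < r0` with `ρ/r ≤ 1/√2`. -/
theorem stmt_0 (ε : ℝ) (hε : 0 < ε) :
    ∃ r0 : ℝ, 0 < r0 ∧
      ∀ κ0 κ α ρ : ℝ, 2 < κ0 → ε ≤ α → α < 1 → 0 < κ → κ < κ0 → 0 ≤ ρ →
        ∀ r : ℝ, ρ < r → r < r0 → ρ / r ≤ 1 / Real.sqrt 2 →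
          deriv (Phi (8 * (κ + 1) / α) α κ ρ) r ≤ 0 := by
  refine ⟨min 1 ((1/4 : ℝ) ^ (1/ε)), lt_min one_pos (Real.rpow_pos_of_pos (by norm_num) _), ?_⟩
  intro κ0 κ α ρ hκ0 hεα hα1 hκ hκκ0 hρ r hρr hr0 _
  have hr : 0 < r := lt_of_le_of_lt hρ hρr
  have hα : 0 < α := lt_of_lt_of_le hε hεα
  set a : ℝ := 8 * (κ + 1) / α with ha
  set β : ℝ := 2 * κ + 2 with hβdef
  have hβ : 0 < β := by positivity
  have hden : ρ ^ β < r ^ β := Real.rpow_lt_rpow hρ hρr hβ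
  have hdpos : 0 < r ^ β - ρ ^ β := sub_pos.mpr hden
  -- r^α ≤ 1/4
  have hr1 : r ≤ 1 := (lt_of_lt_of_le hr0 (min_le_left _ _)).le
  have hrc : r ≤ (1/4 : ℝ) ^ (1/ε) := (lt_of_lt_of_le hr0 (min_le_right _ _)).le
  have hc : ((1/4 : ℝ) ^ (1/ε)) ^ ε = 1/4 := by
    rw [← Real.rpow_mul (by norm_num), one_div_mul_cancel hε.ne', Real.rpow_one]
  have hr4 : r ^ α ≤ 1/4 := by
    calc r ^ α ≤ r ^ ε := Real.rpow_le_rpow_of_exponent_ge hr hr1 hεα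
    _ ≤ ((1/4 : ℝ) ^ (1/ε)) ^ ε := Real.rpow_le_rpow hr.le hrc hε.le
    _ = 1/4 := hc
  -- derivative computation
  have h1 : HasDerivAt (fun x : ℝ => a * x ^ α) (a * (α * r ^ (α - 1))) r := by
    exact (Real.hasDerivAt_rpow_const (Or.inl hr.ne')).const_mul a
  have h2 : HasDerivAt (fun x : ℝ => Real.exp (a * x ^ α))
      (Real.exp (a * r ^ α) * (a * (α * r ^ (α - 1)))) r := h1.exp
  have h3 : HasDerivAt (fun x : ℝ => x ^ β - ρ ^ β) (β * r ^ (β - 1)) r := by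
    simpa using (Real.hasDerivAt_rpow_const (Or.inl hr.ne')).sub_const (ρ ^ β)
  have h4 : HasDerivAt (Phi a α κ ρ)
      ((Real.exp (a * r ^ α) * (a * (α * r ^ (α - 1))) * (r ^ β - ρ ^ β)
        - Real.exp (a * r ^ α) * (β * r ^ (β - 1))) / (r ^ β - ρ ^ β) ^ 2) r := by
    have := h2.div h3 hdpos.ne'
    exact this
  rw [h4.deriv]
  apply div_nonpos_of_nonpos_of_nonneg _ (sq_nonneg _)
  have hE : 0 < Real.exp (a * r ^ α) := Real.exp_pos _
  have key : a * (α * r ^ (α - 1)) * (r ^ β - ρ ^ β) ≤ β * r ^ (β - 1) := by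
    have haα : a * α = 8 * (κ + 1) := by
      rw [ha, div_mul_cancel₀ _ hα.ne']
    have h5 : r ^ β - ρ ^ β ≤ r ^ β := by
      have := Real.rpow_nonneg hρ β
      linarith
    have heq : r ^ (α - 1) * r ^ β = r ^ α * r ^ (β - 1) := by
      rw [← Real.rpow_add hr, ← Real.rpow_add hr]; ring_nf
    have hp1 : (0:ℝ) ≤ r ^ (α - 1) := (Real.rpow_pos_of_pos hr _).le
    have hp2 : (0:ℝ) ≤ r ^ (β - 1) := (Real.rpow_pos_of_pos hr _).le
    calc a * (α * r ^ (α - 1)) * (r ^ β - ρ ^ β)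
        ≤ a * (α * r ^ (α - 1)) * r ^ β := by
          apply mul_le_mul_of_nonneg_left h5
          have : 0 < a := by positivity
          positivity
      _ = 8 * (κ + 1) * (r ^ (α - 1) * r ^ β) := by
          rw [show a * (α * r ^ (α - 1)) * r ^ β = (a * α) * (r ^ (α - 1) * r ^ β) by ring, haα]
      _ = 8 * (κ + 1) * (r ^ α * r ^ (β - 1)) := by rw [heq]
      _ ≤ 8 * (κ + 1) * ((1/4) * r ^ (β - 1)) := by
          apply mul_le_mul_of_nonneg_left _ (by positivity)
          exact mul_le_mul_of_nonneg_right hr4 hp2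
      _ = (2 * (κ + 1)) * r ^ (β - 1) := by ring
      _ = β * r ^ (β - 1) := by rw [hβdef]; ring_nf
  nlinarith [mul_le_mul_of_nonneg_left key hE.le]
end

section
/- Let $\kappa_0>2$, $0<\epsilon\le\alpha<1$, $0<\kappa<\kappa_0$, $a=8(\kappa+1)/\alpha$, $b=128(\kappa_0+1)/\epsilon$, and for $0\le\rho<r$ set $\Phi(r)=e^{ar^{\alpha}}/(r^{2\kappa+2}-\rho^{2\kappa+2})$ and $\Psi(r)=(1-br^{\epsilon})e^{ar^{\alpha}}/(r^{2\kappa+2}-\rho^{2\kappa+2})$. Then there is $r_0=r_0(\kappa_0,\epsilon)>0$ such that for all $0\le\rho<r<r_0$ with $\rho/r\le 1/\sqrt{2}$ one has $\Phi'(r)/(1-r^{\alpha})-\Psi'(r)\ge -\,(2\kappa+2-\epsilon/4)\,b\,\Phi(r)\,r^{2\kappa+1+\epsilon}/(r^{2\kappa+2}-\rho^{2\kappa+2})$. -/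
/-- `Ψ(r) = (1 - b r^ε) e^{a r^α} / (r^{2κ+2} - ρ^{2κ+2})`. -/
noncomputable def Psi (a b α ε κ ρ : ℝ) (r : ℝ) : ℝ :=
  (1 - b * r ^ ε) * Real.exp (a * r ^ α) / (r ^ (2 * κ + 2) - ρ ^ (2 * κ + 2))

/-- The main algebraic inequality, abstracted over the power values. -/
lemma aux_main (E D X Y Z r a α b q ε : ℝ)
    (hE : 0 < E) (hD : 0 < D) (hr : 0 < r) (hX : 0 < X) (hXY : X ≤ Y)
    (hY2 : Y ≤ 1/2) (hZD : Z ≤ 2*D) (hA : 0 ≤ a*α)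
    (hq : 0 < q) (hε : 0 < ε) (hb : 0 ≤ b) (hqb : 8*q ≤ ε*b) :
    -((q - ε/4) * b * (E/D) * (Z*Y/r) / D)
      ≤ (E * (a * (α * (X/r))) * D - E * (q * (Z/r))) / D^2 / (1 - X)
        - ((-(b*(ε*(Y/r))) * E + (1 - b*Y) * (E * (a * (α * (X/r))))) * D
            - (1 - b*Y) * E * (q * (Z/r))) / D^2 := by
  have hX2 : X ≤ 1/2 := hXY.trans hY2
  have h1X : 0 < 1 - X := by linarith
  have hYpos : 0 < Y := lt_of_lt_of_le hX hXY
  rw [← sub_nonneg]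
  have key : (E * (a * (α * (X/r))) * D - E * (q * (Z/r))) / D^2 / (1 - X)
        - ((-(b*(ε*(Y/r))) * E + (1 - b*Y) * (E * (a * (α * (X/r))))) * D
            - (1 - b*Y) * E * (q * (Z/r))) / D^2
        - -((q - ε/4) * b * (E/D) * (Z*Y/r) / D)
      = E * (a*α*X*X*D + a*α*X*D*(b*Y)*(1-X)
          + ((1-X)*(b*ε*Y*D - ε/4*b*Z*Y) - q*Z*X)) / (r * D^2 * (1-X)) := by
    field_simp
    ring
  rw [key]
  apply div_nonneg _ (by positivity)
  have h1 : ε/4*b*Z*Y ≤ ε/2*b*D*Y := by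
    have hint : 0 ≤ ε*b*Y*(2*D - Z) :=
      mul_nonneg (mul_nonneg (mul_nonneg hε.le hb) hYpos.le) (by linarith)
    linarith [hint]
  have hW : (0:ℝ) ≤ b*ε*Y*D - ε/4*b*Z*Y := by
    nlinarith [h1, mul_nonneg (mul_nonneg (mul_nonneg hε.le hb) hD.le) hYpos.le]
  have h3 : 1/2*(ε/2*b*D*Y) ≤ (1-X)*(b*ε*Y*D - ε/4*b*Z*Y) := by
    have hint : 0 ≤ (1/2 - X)*(b*ε*Y*D - ε/4*b*Z*Y) :=
      mul_nonneg (by linarith) hW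
    linarith [hint, h1]
  have h4 : q*Z*X ≤ 2*q*D*Y := by
    have h4a : Z*X ≤ 2*D*Y := mul_le_mul hZD hXY hX.le (by linarith)
    have h4b : q*(Z*X) ≤ q*(2*D*Y) := mul_le_mul_of_nonneg_left h4a hq.le
    linarith [h4b]
  have hT2 : 0 ≤ (1-X)*(b*ε*Y*D - ε/4*b*Z*Y) - q*Z*X := by
    linarith [h3, h4, mul_nonneg (sub_nonneg.mpr hqb) (mul_nonneg hD.le hYpos.le)]
  have hT1a : 0 ≤ a*α*X*X*D :=
    mul_nonneg (mul_nonneg (mul_nonneg hA hX.le) hX.le) hD.le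
  have hT1b : 0 ≤ a*α*X*D*(b*Y)*(1-X) :=
    mul_nonneg (mul_nonneg (mul_nonneg (mul_nonneg hA hX.le) hD.le)
      (mul_nonneg hb hYpos.le)) h1X.le
  exact mul_nonneg hE.le (by linarith)

/-- There is `r0 = r0(κ0, ε) > 0` such that for all `0 ≤ ρ < r < r0` with `ρ/r ≤ 1/√2`,
`Φ'(r)/(1 - r^α) - Ψ'(r) ≥ -(2κ+2-ε/4) b Φ(r) r^{2κ+1+ε} / (r^{2κ+2} - ρ^{2κ+2})`,
where `a = 8(κ+1)/α` and `b = 128(κ0+1)/ε`. -/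
theorem stmt_1 (κ0 ε : ℝ) (hκ0 : 2 < κ0) (hε : 0 < ε) :
    ∃ r0 : ℝ, 0 < r0 ∧
      ∀ κ α ρ : ℝ, ε ≤ α → α < 1 → 0 < κ → κ < κ0 → 0 ≤ ρ →
        ∀ r : ℝ, ρ < r → r < r0 → ρ / r ≤ 1 / Real.sqrt 2 →
          -((2 * κ + 2 - ε / 4) * (128 * (κ0 + 1) / ε) *
              Phi (8 * (κ + 1) / α) α κ ρ r * r ^ (2 * κ + 1 + ε) /
              (r ^ (2 * κ + 2) - ρ ^ (2 * κ + 2)))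
            ≤ deriv (Phi (8 * (κ + 1) / α) α κ ρ) r / (1 - r ^ α)
              - deriv (Psi (8 * (κ + 1) / α) (128 * (κ0 + 1) / ε) α ε κ ρ) r := by
  refine ⟨min 1 ((1/2 : ℝ) ^ (1/ε : ℝ)), lt_min one_pos (Real.rpow_pos_of_pos one_half_pos _), ?_⟩
  intro κ α ρ hεα hα1 hκ hκκ0 hρ r hρr hrr0 hror
  have hα : 0 < α := lt_of_lt_of_le hε hεα
  have hr0 : 0 < r := lt_of_le_of_lt hρ hρr
  have hrne : r ≠ 0 := hr0.ne'
  have hr1 : r < 1 := lt_of_lt_of_le hrr0 (min_le_left _ _)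
  set a : ℝ := 8 * (κ + 1) / α with ha
  set b : ℝ := 128 * (κ0 + 1) / ε with hb
  have haα : a * α = 8 * (κ + 1) := by
    rw [ha]; field_simp
  have hbε : ε * b = 128 * (κ0 + 1) := by
    rw [hb]; field_simp
  have hbpos : 0 < b := by
    rw [hb]; positivity
  -- power facts
  have hY : r ^ ε < 1/2 := by
    have h := Real.rpow_lt_rpow hr0.le (lt_of_lt_of_le hrr0 (min_le_right _ _)) hε
    rwa [← Real.rpow_mul (by norm_num : (0:ℝ) ≤ 1/2), one_div_mul_cancel hε.ne',
      Real.rpow_one] at h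
  have hXY : r ^ α ≤ r ^ ε := Real.rpow_le_rpow_of_exponent_ge hr0 hr1.le hεα
  have hXpos : 0 < r ^ α := Real.rpow_pos_of_pos hr0 _
  have hYpos : 0 < r ^ ε := Real.rpow_pos_of_pos hr0 _
  have hZpos : 0 < r ^ (2*κ+2) := Real.rpow_pos_of_pos hr0 _
  have hρq : ρ ^ (2*κ+2) ≤ r ^ (2*κ+2) / 2 := by
    rcases eq_or_lt_of_le hρ with h0 | h0
    · rw [← h0, Real.zero_rpow (by positivity : (2*κ+2) ≠ 0)]
      positivity
    · have hs2 : (0:ℝ) < Real.sqrt 2 := Real.sqrt_pos.mpr (by norm_num)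
      have hs1 : (1:ℝ) ≤ Real.sqrt 2 := by
        rw [show (1:ℝ) = Real.sqrt 1 from (Real.sqrt_one).symm]
        exact Real.sqrt_le_sqrt (by norm_num)
      have h1 : (ρ/r) ^ (2*κ+2) ≤ (1/Real.sqrt 2) ^ (2*κ+2) :=
        Real.rpow_le_rpow (by positivity) hror (by linarith)
      have h2 : (1/Real.sqrt 2 : ℝ) ^ (2*κ+2) ≤ (1/Real.sqrt 2 : ℝ) ^ ((2:ℕ):ℝ) :=
        Real.rpow_le_rpow_of_exponent_ge (by positivity)
          (by rw [div_le_one hs2]; exact hs1) (by push_cast; linarith)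
      have h3 : (1/Real.sqrt 2 : ℝ) ^ ((2:ℕ):ℝ) = 1/2 := by
        rw [Real.rpow_natCast, div_pow, one_pow, Real.sq_sqrt (by norm_num : (0:ℝ) ≤ 2)]
      rw [Real.div_rpow hρ hr0.le] at h1
      rw [h3] at h2
      have h4 := h1.trans h2
      calc ρ ^ (2*κ+2) = (ρ ^ (2*κ+2) / r ^ (2*κ+2)) * r ^ (2*κ+2) := by
            field_simp
        _ ≤ (1/2) * r ^ (2*κ+2) := mul_le_mul_of_nonneg_right h4 hZpos.le
        _ = r ^ (2*κ+2) / 2 := by ring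
  have hD : 0 < r ^ (2*κ+2) - ρ ^ (2*κ+2) := by linarith
  have hZD : r ^ (2*κ+2) ≤ 2 * (r ^ (2*κ+2) - ρ ^ (2*κ+2)) := by linarith
  -- derivatives
  have hrpα : HasDerivAt (fun s : ℝ => s ^ α) (α * r ^ (α - 1)) r :=
    Real.hasDerivAt_rpow_const (Or.inl hrne)
  have hrpε : HasDerivAt (fun s : ℝ => s ^ ε) (ε * r ^ (ε - 1)) r :=
    Real.hasDerivAt_rpow_const (Or.inl hrne)
  have hEd : HasDerivAt (fun s : ℝ => Real.exp (a * s ^ α))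
      (Real.exp (a * r ^ α) * (a * (α * r ^ (α - 1)))) r :=
    (hrpα.const_mul a).exp
  have hDd : HasDerivAt (fun s : ℝ => s ^ (2*κ+2) - ρ ^ (2*κ+2))
      ((2*κ+2) * r ^ (2*κ+2 - 1)) r :=
    (Real.hasDerivAt_rpow_const (Or.inl hrne)).sub_const _
  have hPhi : HasDerivAt (Phi a α κ ρ)
      ((Real.exp (a * r ^ α) * (a * (α * r ^ (α - 1))) * (r ^ (2*κ+2) - ρ ^ (2*κ+2))
        - Real.exp (a * r ^ α) * ((2*κ+2) * r ^ (2*κ+2 - 1)))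
        / (r ^ (2*κ+2) - ρ ^ (2*κ+2)) ^ 2) r := hEd.div hDd hD.ne'
  have hNum : HasDerivAt (fun s : ℝ => (1 - b * s ^ ε) * Real.exp (a * s ^ α))
      ((-(b * (ε * r ^ (ε - 1)))) * Real.exp (a * r ^ α)
        + (1 - b * r ^ ε) * (Real.exp (a * r ^ α) * (a * (α * r ^ (α - 1))))) r :=
    ((hrpε.const_mul b).const_sub 1).mul hEd
  have hPsi : HasDerivAt (Psi a b α ε κ ρ)
      ((((-(b * (ε * r ^ (ε - 1)))) * Real.exp (a * r ^ α)
          + (1 - b * r ^ ε) * (Real.exp (a * r ^ α) * (a * (α * r ^ (α - 1)))))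
          * (r ^ (2*κ+2) - ρ ^ (2*κ+2))
        - (1 - b * r ^ ε) * Real.exp (a * r ^ α) * ((2*κ+2) * r ^ (2*κ+2 - 1)))
        / (r ^ (2*κ+2) - ρ ^ (2*κ+2)) ^ 2) r := hNum.div hDd hD.ne'
  -- rewrite powers
  have e1 : r ^ (α - 1) = r ^ α / r := by
    rw [Real.rpow_sub hr0, Real.rpow_one]
  have e2 : r ^ (ε - 1) = r ^ ε / r := by
    rw [Real.rpow_sub hr0, Real.rpow_one]
  have e3 : r ^ (2*κ+2 - 1) = r ^ (2*κ+2) / r := by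
    rw [Real.rpow_sub hr0, Real.rpow_one]
  have e4 : r ^ (2*κ+1+ε) = r ^ (2*κ+2) * r ^ ε / r := by
    rw [show 2*κ+1+ε = (2*κ+2) + ε - 1 by ring, Real.rpow_sub hr0,
      Real.rpow_add hr0, Real.rpow_one]
  rw [hPhi.deriv, hPsi.deriv, e1, e2, e3]
  have hL : -((2 * κ + 2 - ε / 4) * b * Phi a α κ ρ r * r ^ (2 * κ + 1 + ε) /
        (r ^ (2 * κ + 2) - ρ ^ (2 * κ + 2)))
      = -((2*κ+2 - ε/4) * b
          * (Real.exp (a * r ^ α) / (r ^ (2*κ+2) - ρ ^ (2*κ+2)))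
          * (r ^ (2*κ+2) * r ^ ε / r) / (r ^ (2*κ+2) - ρ ^ (2*κ+2))) := by
    simp only [Phi]
    rw [e4]
  rw [hL]
  exact aux_main (Real.exp (a * r ^ α)) (r ^ (2*κ+2) - ρ ^ (2*κ+2))
    (r ^ α) (r ^ ε) (r ^ (2*κ+2)) r a α b (2*κ+2) ε
    (Real.exp_pos _) hD hr0 hXpos hXY hY.le hZD
    (by rw [haα]; linarith) (by linarith) hε hbpos.le
    (by rw [hbε]; linarith)
end

section
/- With $\Phi$ as above ($\Phi(r)=e^{ar^{\alpha}}/(r^{2\kappa+2}-\rho^{2\kappa+2})$, $a=8(\kappa+1)/\alpha$), there is $r_0=r_0(\kappa_0,\epsilon)>0$ such that for all $0\le\rho<r<r_0$ with $\rho/r\le 1/\sqrt{2}$, $\frac{1+r^{\alpha}}{1-r^{\alpha}}\Phi'(r)+\frac{2(\kappa+1)r^{2\kappa+1}}{r^{2\kappa+2}-\rho^{2\kappa+2}}\Phi(r)\ge 0$. -/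
set_option maxHeartbeats 1000000

/-- There is `r0 = r0(κ0, ε) > 0` such that for all `0 ≤ ρ < r < r0` with `ρ/r ≤ 1/√2`,
`((1+r^α)/(1-r^α)) Φ'(r) + (2(κ+1) r^{2κ+1}/(r^{2κ+2}-ρ^{2κ+2})) Φ(r) ≥ 0`,
where `a = 8(κ+1)/α`. -/
theorem stmt_2 (κ0 ε : ℝ) (hκ0 : 2 < κ0) (hε : 0 < ε) :
    ∃ r0 : ℝ, 0 < r0 ∧
      ∀ κ α ρ : ℝ, ε ≤ α → α < 1 → 0 < κ → κ < κ0 → 0 ≤ ρ →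
        ∀ r : ℝ, ρ < r → r < r0 → ρ / r ≤ 1 / Real.sqrt 2 →
          0 ≤ (1 + r ^ α) / (1 - r ^ α) * deriv (Phi (8 * (κ + 1) / α) α κ ρ) r
              + 2 * (κ + 1) * r ^ (2 * κ + 1) / (r ^ (2 * κ + 2) - ρ ^ (2 * κ + 2)) *
                Phi (8 * (κ + 1) / α) α κ ρ r := by
  refine ⟨1, one_pos, ?_⟩
  intro κ α ρ hεα hα1 hκ _ hρ r hρr hr1 hratio
  have hαpos : 0 < α := lt_of_lt_of_le hε hεα
  have hr : 0 < r := lt_of_le_of_lt hρ hρr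
  set a : ℝ := 8 * (κ + 1) / α with ha
  set x : ℝ := r ^ α with hxdef
  have hx : 0 < x := Real.rpow_pos_of_pos hr α
  have hx1 : x < 1 := Real.rpow_lt_one hr.le hr1 hαpos
  set D : ℝ := r ^ (2 * κ + 2) - ρ ^ (2 * κ + 2) with hDdef
  have hρle : ρ ^ (2 * κ + 2) ≤ r ^ (2 * κ + 2) / 2 := by
    have hs2 : (0:ℝ) < Real.sqrt 2 := Real.sqrt_pos.mpr (by norm_num)
    have hρr' : ρ ≤ r * (1 / Real.sqrt 2) := by
      have := (div_le_iff₀ hr).mp hratio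
      linarith
    have h1 : ρ ^ (2 * κ + 2) ≤ (r * (1 / Real.sqrt 2)) ^ (2 * κ + 2) :=
      Real.rpow_le_rpow hρ hρr' (by linarith)
    have h2 : (r * (1 / Real.sqrt 2)) ^ (2 * κ + 2)
        = r ^ (2 * κ + 2) * (1 / Real.sqrt 2) ^ (2 * κ + 2) :=
      Real.mul_rpow hr.le (by positivity)
    have h3 : (1 / Real.sqrt 2 : ℝ) ^ (2 * κ + 2) ≤ (1 / Real.sqrt 2 : ℝ) ^ (2:ℝ) := by
      apply Real.rpow_le_rpow_of_exponent_ge (by positivity)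
      · rw [div_le_one hs2]
        have : (1:ℝ) ≤ Real.sqrt 2 := by
          rw [show (1:ℝ) = Real.sqrt 1 by simp]
          exact Real.sqrt_le_sqrt (by norm_num)
        linarith
      · linarith
    have h4 : (1 / Real.sqrt 2 : ℝ) ^ (2:ℝ) = 1 / 2 := by
      rw [show ((2:ℝ)) = ((2:ℕ):ℝ) by norm_num, Real.rpow_natCast]
      norm_num [div_pow, Real.sq_sqrt]
    have hrp : 0 < r ^ (2 * κ + 2) := Real.rpow_pos_of_pos hr _
    calc ρ ^ (2 * κ + 2) ≤ r ^ (2 * κ + 2) * (1 / Real.sqrt 2) ^ (2 * κ + 2) := by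
          rw [← h2]; exact h1
      _ ≤ r ^ (2 * κ + 2) * (1 / 2) := by
          rw [← h4]; exact mul_le_mul_of_nonneg_left h3 hrp.le
      _ = r ^ (2 * κ + 2) / 2 := by ring
  have hρlt : ρ ^ (2 * κ + 2) < r ^ (2 * κ + 2) := by
    have hrp : 0 < r ^ (2 * κ + 2) := Real.rpow_pos_of_pos hr _
    linarith
  have hD : 0 < D := by simp only [hDdef]; linarith
  have hDhalf : r ^ (2 * κ + 2) / 2 ≤ D := by simp only [hDdef]; linarith
  -- derivative
  set E : ℝ := Real.exp (a * x) with hEdef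
  have hE : 0 < E := Real.exp_pos _
  have h1 : HasDerivAt (fun y : ℝ => a * y ^ α) (a * (α * r ^ (α - 1))) r :=
    (Real.hasDerivAt_rpow_const (Or.inl hr.ne')).const_mul a
  have h2 : HasDerivAt (fun y : ℝ => Real.exp (a * y ^ α)) (E * (a * (α * r ^ (α - 1)))) r :=
    h1.exp
  have h3 : HasDerivAt (fun y : ℝ => y ^ (2 * κ + 2) - ρ ^ (2 * κ + 2))
      ((2 * κ + 2) * r ^ (2 * κ + 2 - 1)) r :=
    (Real.hasDerivAt_rpow_const (Or.inl hr.ne')).sub_const _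
  have h4 : HasDerivAt (Phi a α κ ρ)
      ((E * (a * (α * r ^ (α - 1))) * D - E * ((2 * κ + 2) * r ^ (2 * κ + 2 - 1))) / D ^ 2) r :=
    h2.div h3 hD.ne'
  have hderiv : deriv (Phi a α κ ρ) r
      = (E * (a * (α * r ^ (α - 1))) * D - E * ((2 * κ + 2) * r ^ (2 * κ + 2 - 1))) / D ^ 2 :=
    h4.deriv
  have hexp : (2 * κ + 2 - 1 : ℝ) = 2 * κ + 1 := by ring
  rw [hexp] at hderiv
  set s : ℝ := r ^ (α - 1) with hsdef
  set t : ℝ := r ^ (2 * κ + 1) with htdef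
  have hs : 0 < s := Real.rpow_pos_of_pos hr _
  have ht : 0 < t := Real.rpow_pos_of_pos hr _
  have hst : s * r ^ (2 * κ + 2) = x * t := by
    rw [hsdef, hxdef, htdef, ← Real.rpow_add hr, ← Real.rpow_add hr]
    ring_nf
  have hsD : x * t / 2 ≤ s * D := by
    have := mul_le_mul_of_nonneg_left hDhalf hs.le
    nlinarith [hst, this]
  have haα : a * α = 8 * (κ + 1) := div_mul_cancel₀ _ hαpos.ne'
  have hPhir : Phi a α κ ρ r = E / D := rfl
  clear_value a x D E s t
  rw [hderiv, hPhir]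
  have h1x : 0 < 1 - x := by linarith
  have haαs : a * (α * s) = 8 * (κ + 1) * s := by rw [← mul_assoc, haα]
  have key : (1 + x) / (1 - x) * ((E * (a * (α * s)) * D - E * ((2 * κ + 2) * t)) / D ^ 2)
      + 2 * (κ + 1) * t / D * (E / D)
      = (8 * (κ + 1) * ((1 + x) * (s * D)) - 4 * (κ + 1) * (x * t)) * (E / ((1 - x) * D ^ 2)) := by
    rw [haαs]
    field_simp
    ring
  rw [key]
  have hnum : 0 ≤ 8 * (κ + 1) * ((1 + x) * (s * D)) - 4 * (κ + 1) * (x * t) := by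
    have h5 : x * t / 2 ≤ (1 + x) * (s * D) := by
      nlinarith [mul_pos hs hD, mul_pos hx ht, hsD]
    have h6 := mul_le_mul_of_nonneg_left h5 (by positivity : (0:ℝ) ≤ 8 * (κ + 1))
    linarith
  have hden : 0 < E / ((1 - x) * D ^ 2) := by positivity
  exact mul_nonneg hnum hden.le
end

section
/- With $\Phi,\Psi$ as above and $b=128(\kappa_0+1)/\epsilon$, there is $r_0=r_0(\kappa_0,\epsilon)>0$ such that for all $0\le\rho<r<r_0$ with $\rho/r\le 1/\sqrt{2}$, $-\frac{\Phi'(r)}{1-r^{\alpha}}-\frac{2(\kappa+1)r^{2\kappa+1}}{r^{2\kappa+2}-\rho^{2\kappa+2}}\Psi(r)\ge \frac{(2\kappa+2-\epsilon/8)\,b\,\Phi(r)\,r^{2\kappa+1+\epsilon}}{r^{2\kappa+2}-\rho^{2\kappa+2}}$. -/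
/-- There is `r0 = r0(κ0, ε) > 0` such that for all `0 ≤ ρ < r < r0` with `ρ/r ≤ 1/√2`,
`-Φ'(r)/(1-r^α) - (2(κ+1) r^{2κ+1}/(r^{2κ+2}-ρ^{2κ+2})) Ψ(r)
  ≥ (2κ+2-ε/8) b Φ(r) r^{2κ+1+ε} / (r^{2κ+2}-ρ^{2κ+2})`,
where `a = 8(κ+1)/α`, `b = 128(κ0+1)/ε`. -/
theorem stmt_3 (κ0 ε : ℝ) (hκ0 : 2 < κ0) (hε : 0 < ε) :
    ∃ r0 : ℝ, 0 < r0 ∧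
      ∀ κ α ρ : ℝ, ε ≤ α → α < 1 → 0 < κ → κ < κ0 → 0 ≤ ρ →
        ∀ r : ℝ, ρ < r → r < r0 → ρ / r ≤ 1 / Real.sqrt 2 →
          (2 * κ + 2 - ε / 8) * (128 * (κ0 + 1) / ε) *
              Phi (8 * (κ + 1) / α) α κ ρ r * r ^ (2 * κ + 1 + ε) /
              (r ^ (2 * κ + 2) - ρ ^ (2 * κ + 2))
            ≤ -(deriv (Phi (8 * (κ + 1) / α) α κ ρ) r / (1 - r ^ α))
              - 2 * (κ + 1) * r ^ (2 * κ + 1) / (r ^ (2 * κ + 2) - ρ ^ (2 * κ + 2)) *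
                Psi (8 * (κ + 1) / α) (128 * (κ0 + 1) / ε) α ε κ ρ r := by
  refine ⟨(1/2 : ℝ) ^ (1/ε), Real.rpow_pos_of_pos (by norm_num) _, ?_⟩
  intro κ α ρ hεα hα1 hκ hκκ0 hρ r hρr hrr0 _
  have hr : 0 < r := lt_of_le_of_lt hρ hρr
  have hα : 0 < α := lt_of_lt_of_le hε hεα
  have hs2 : r ^ ε < 1/2 := by
    have h := Real.rpow_lt_rpow hr.le hrr0 hε
    rwa [← Real.rpow_mul (by norm_num : (0:ℝ) ≤ 1/2), one_div_mul_cancel hε.ne',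
      Real.rpow_one] at h
  have hr1 : r < 1 := by
    by_contra h
    push_neg at h
    have h1 : (1:ℝ)^ε ≤ r^ε := Real.rpow_le_rpow zero_le_one h hε.le
    rw [Real.one_rpow] at h1
    linarith
  have hts : r ^ α ≤ r ^ ε := Real.rpow_le_rpow_of_exponent_ge hr hr1.le hεα
  have ht2 : r ^ α < 1/2 := lt_of_le_of_lt hts hs2
  have htpos : 0 < r ^ α := Real.rpow_pos_of_pos hr α
  have hspos : 0 < r ^ ε := Real.rpow_pos_of_pos hr ε
  have hQlt : ρ ^ (2*κ+2) < r ^ (2*κ+2) := Real.rpow_lt_rpow hρ hρr (by linarith)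
  have hD : 0 < r ^ (2*κ+2) - ρ ^ (2*κ+2) := sub_pos.mpr hQlt
  have hQnn : 0 ≤ ρ ^ (2*κ+2) := Real.rpow_nonneg hρ _
  have hPpos : 0 < r ^ (2*κ+1) := Real.rpow_pos_of_pos hr _
  -- derivative
  have hexp : HasDerivAt (fun x : ℝ => Real.exp (8*(κ+1)/α * x ^ α))
      (Real.exp (8*(κ+1)/α * r ^ α) * (8*(κ+1) * r ^ (α - 1))) r := by
    have h1 : HasDerivAt (fun x : ℝ => x ^ α) (α * r ^ (α - 1)) r :=
      Real.hasDerivAt_rpow_const (Or.inl hr.ne')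
    have h2 := (h1.const_mul (8*(κ+1)/α)).exp
    convert h2 using 1
    field_simp
  have hden : HasDerivAt (fun x : ℝ => x ^ (2*κ+2) - ρ ^ (2*κ+2))
      ((2*κ+2) * r ^ (2*κ+1)) r := by
    have h1 : HasDerivAt (fun x : ℝ => x ^ (2*κ+2)) ((2*κ+2) * r ^ (2*κ+2-1)) r :=
      Real.hasDerivAt_rpow_const (Or.inl hr.ne')
    rw [show (2*κ+2-1 : ℝ) = 2*κ+1 by ring] at h1
    exact h1.sub_const _
  have hPhi : HasDerivAt (Phi (8*(κ+1)/α) α κ ρ)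
      ((Real.exp (8*(κ+1)/α * r ^ α) * (8*(κ+1) * r ^ (α-1)) * (r^(2*κ+2) - ρ^(2*κ+2))
        - Real.exp (8*(κ+1)/α * r ^ α) * ((2*κ+2) * r^(2*κ+1))) / (r^(2*κ+2) - ρ^(2*κ+2))^2) r :=
    hexp.div hden hD.ne'
  rw [hPhi.deriv]
  simp only [Phi, Psi]
  have e2 : r ^ (2*κ+2) = r ^ (2*κ+1) * r := by
    rw [show (2*κ+2:ℝ) = (2*κ+1)+1 by ring, Real.rpow_add hr, Real.rpow_one]
  have e3 : r ^ (α-1) = r ^ α / r := by rw [Real.rpow_sub hr, Real.rpow_one]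
  have e4 : r ^ (2*κ+1+ε) = r ^ (2*κ+1) * r ^ ε := Real.rpow_add hr _ _
  rw [e2] at hD hQlt
  rw [e2, e3, e4]
  set P := r ^ (2*κ+1) with hP
  set Q := ρ ^ (2*κ+2) with hQ
  set t := r ^ α with ht
  set s := r ^ ε with hs
  set E := Real.exp (8*(κ+1)/α * t) with hE
  have hEpos : 0 < E := Real.exp_pos _
  have h1t : 0 < 1 - t := by linarith
  have haux : (κ+1)*t ≤ (κ0+1)*s := by
    nlinarith [mul_nonneg hspos.le (by linarith : (0:ℝ) ≤ κ0 - κ),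
      mul_nonneg (by linarith : (0:ℝ) ≤ κ+1) (by linarith : (0:ℝ) ≤ s - t)]
  have hK : 0 ≤ (16*(κ0+1)*P*s + (2*κ+2)*P*t - 16*(κ0+1)*P*s*t) * r - 8*(κ+1)*t*(P*r - Q) := by
    nlinarith [mul_nonneg (mul_nonneg (by linarith : (0:ℝ) ≤ κ0+1)
        (mul_nonneg (mul_nonneg hPpos.le hr.le) hspos.le)) (by linarith : (0:ℝ) ≤ 1 - 2*t),
      mul_nonneg (mul_nonneg hPpos.le hr.le) (by linarith : (0:ℝ) ≤ (κ0+1)*s - (κ+1)*t),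
      mul_nonneg (mul_nonneg (by linarith : (0:ℝ) ≤ κ+1) htpos.le) hQnn,
      mul_nonneg (mul_nonneg (mul_nonneg (by linarith : (0:ℝ) ≤ κ+1) htpos.le) hPpos.le) hr.le]
  rw [← sub_nonneg]
  have hY : 0 ≤ E * ((16*(κ0+1)*P*s + (2*κ+2)*P*t - 16*(κ0+1)*P*s*t) * r - 8*(κ+1)*t*(P*r - Q))
      / ((P*r - Q)^2 * (1-t) * r) := by
    apply div_nonneg (mul_nonneg hEpos.le hK)
    positivity
  convert hY using 1
  field_simp
  ring
end

section
/- Let $0<\xi<1$ and set $\eta=\xi/(e^{5/2}+\xi-1)\in(0,1)$. Let $V:(-1,0)\to[0,\infty)$ be a measurable function that is nondecreasing in $t$ and satisfies the epiperimetric-type decay $V(t/e)\le(1-\xi)V(t)$ for all $t\in(-1,0)$. Then for every $0<r<1$, $\int_{-r^2}^{0}(-t)^{3/2}\,V(t)\,dt\;\le\;\frac{(1-\eta)}{5/2}\,r^{5}\,V(-r^2)$. -/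
open MeasureTheory

set_option maxHeartbeats 4000000 in
/-- If `V : (-1,0) → [0,∞)` is measurable, nondecreasing in `t`, and satisfies the
epiperimetric-type decay `V(t/e) ≤ (1-ξ) V(t)`, then for `η = ξ/(e^{5/2}+ξ-1)` and every
`0 < r < 1`, `∫_{-r²}^0 (-t)^{3/2} V(t) dt ≤ ((1-η)/(5/2)) r⁵ V(-r²)`. -/
theorem stmt_9 (ξ η : ℝ) (hξ0 : 0 < ξ) (hξ1 : ξ < 1)
    (hη : η = ξ / (Real.exp (5 / 2) + ξ - 1))
    (V : ℝ → ℝ) (hVmeas : Measurable V)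
    (hVnonneg : ∀ t ∈ Set.Ioo (-1 : ℝ) 0, 0 ≤ V t)
    (hVmono : ∀ s ∈ Set.Ioo (-1 : ℝ) 0, ∀ t ∈ Set.Ioo (-1 : ℝ) 0, s ≤ t → V s ≤ V t)
    (hdecay : ∀ t ∈ Set.Ioo (-1 : ℝ) 0, V (t / Real.exp 1) ≤ (1 - ξ) * V t) :
    ∀ r : ℝ, 0 < r → r < 1 →
      (∫ t in Set.Ioo (-r ^ 2) (0 : ℝ), (-t) ^ ((3 : ℝ) / 2) * V t)
        ≤ (1 - η) / (5 / 2) * r ^ 5 * V (-r ^ 2) := by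
  intro r hr0 hr1
  have he0 : (0:ℝ) < Real.exp 1 := Real.exp_pos 1
  have he1 : (1:ℝ) < Real.exp 1 := by
    have := Real.exp_one_gt_d9; linarith
  have hinv0 : (0:ℝ) < (Real.exp 1)⁻¹ := by positivity
  have hinv1 : ((Real.exp 1)⁻¹:ℝ) < 1 := inv_lt_one_of_one_lt₀ he1
  have hr2 : (0:ℝ) < r ^ 2 := by positivity
  have hr21 : r ^ 2 < 1 := by nlinarith
  have hmem : (-r ^ 2) ∈ Set.Ioo (-1:ℝ) 0 := ⟨by linarith, by linarith⟩
  have hK0 : 0 ≤ V (-r ^ 2) := hVnonneg _ hmem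
  -- step 1: the pointwise bound `V t ≤ V (-r^2)` on `Ioo (-r^2) 0`
  have key : ∀ m : ℕ, ∀ t : ℝ, -r ^ 2 ≤ t →
      t ≤ -r ^ 2 * ((Real.exp 1)⁻¹) ^ (m+1) → V t ≤ V (-r ^ 2) := by
    intro m
    induction m with
    | zero =>
      intro t h1 h2
      have ht0 : t < 0 := lt_of_le_of_lt h2 (by nlinarith)
      have htmem : t ∈ Set.Ioo (-1:ℝ) 0 := ⟨by linarith, ht0⟩
      have hb : -r^2 * (Real.exp 1)⁻¹ ∈ Set.Ioo (-1:ℝ) 0 := ⟨by nlinarith, by nlinarith⟩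
      have h3 : V t ≤ V (-r^2 * (Real.exp 1)⁻¹) :=
        hVmono t htmem _ hb (by simpa using h2)
      have h4 : V (-r^2 / Real.exp 1) ≤ (1-ξ) * V (-r^2) := hdecay _ hmem
      have heq : -r^2 * (Real.exp 1)⁻¹ = -r^2 / Real.exp 1 := by ring
      rw [heq] at h3
      nlinarith
    | succ m ih =>
      intro t h1 h2
      by_cases hc : t ≤ -r ^ 2 * ((Real.exp 1)⁻¹) ^ (m+1)
      · exact ih t h1 hc
      · push_neg at hc
        have hpm : (0:ℝ) < ((Real.exp 1)⁻¹) ^ m := by positivity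
        have hpm1 : ((Real.exp 1)⁻¹:ℝ) ^ m ≤ 1 := pow_le_one₀ hinv0.le hinv1.le
        have hmul : ((Real.exp 1)⁻¹:ℝ) ^ (m+1) * Real.exp 1 = ((Real.exp 1)⁻¹) ^ m := by
          rw [pow_succ, mul_assoc, inv_mul_cancel₀ (ne_of_gt he0), mul_one]
        have hmul2 : ((Real.exp 1)⁻¹:ℝ) ^ (m+2) * Real.exp 1 = ((Real.exp 1)⁻¹) ^ (m+1) := by
          rw [pow_succ, mul_assoc, inv_mul_cancel₀ (ne_of_gt he0), mul_one]
        have hte1 : -r ^ 2 ≤ t * Real.exp 1 := by nlinarith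
        have hte2 : t * Real.exp 1 ≤ -r ^ 2 * ((Real.exp 1)⁻¹) ^ (m+1) := by nlinarith
        have hte0 : t * Real.exp 1 < 0 := by nlinarith [pow_pos hinv0 (m+1)]
        have htemem : t * Real.exp 1 ∈ Set.Ioo (-1:ℝ) 0 := ⟨by linarith, hte0⟩
        have h5 : V ((t * Real.exp 1) / Real.exp 1) ≤ (1-ξ) * V (t * Real.exp 1) :=
          hdecay _ htemem
        rw [mul_div_cancel_right₀ _ (ne_of_gt he0)] at h5
        have h6 : V (t * Real.exp 1) ≤ V (-r ^ 2) := ih _ hte1 hte2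
        have h7 : 0 ≤ V (t * Real.exp 1) := hVnonneg _ htemem
        nlinarith
  have Vbound : ∀ t ∈ Set.Ioo (-(r^2)) 0, V t ≤ V (-r^2) := by
    intro t ht
    obtain ⟨n, hn⟩ := exists_pow_lt_of_lt_one (x := -t / r^2) (y := (Real.exp 1)⁻¹)
      (div_pos (by linarith [ht.2] : (0:ℝ) < -t) hr2) hinv1
    apply key n t (by simpa using ht.1.le)
    have hpn : (0:ℝ) < ((Real.exp 1)⁻¹) ^ n := by positivity
    have h1 : ((Real.exp 1)⁻¹:ℝ) ^ (n+1) ≤ ((Real.exp 1)⁻¹) ^ n := by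
      rw [pow_succ]; nlinarith
    have h2 : (((Real.exp 1)⁻¹:ℝ) ^ n) * r^2 < -t := (lt_div_iff₀ hr2).mp hn
    nlinarith
  -- notation
  set g : ℝ → ℝ := fun t => (-t) ^ ((3:ℝ)/2) * V t with hg
  have hr23 : ((r^2:ℝ))^((3:ℝ)/2) = r^3 := by
    rw [← Real.rpow_natCast r 2, ← Real.rpow_mul hr0.le, ← Real.rpow_natCast r 3]
    norm_num
  have hr25 : ((r^2:ℝ))^((5:ℝ)/2) = r^5 := by
    rw [← Real.rpow_natCast r 2, ← Real.rpow_mul hr0.le, ← Real.rpow_natCast r 5]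
    norm_num
  have hrpm : Measurable (fun t : ℝ => (-t) ^ ((3:ℝ)/2)) :=
    (Real.continuous_rpow_const (by norm_num)).measurable.comp measurable_neg
  -- integrability helper
  have hbdd : ∀ (W : ℝ → ℝ), Measurable W → (∀ t ∈ Set.Ioo (-(r^2):ℝ) 0, |W t| ≤ V (-r^2)) →
      IntegrableOn (fun t => (-t) ^ ((3:ℝ)/2) * W t) (Set.Ioo (-(r^2):ℝ) 0) := by
    intro W hWm hWb
    refine Measure.integrableOn_of_bounded (M := r^3 * V (-r^2)) (measure_Ioo_lt_top).ne
      ((hrpm.mul hWm).aestronglyMeasurable) ?_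
    rw [ae_restrict_iff' measurableSet_Ioo]
    filter_upwards with t ht
    have h1 : 0 < -t := by linarith [ht.2]
    have h2 : (-t) ^ ((3:ℝ)/2) ≤ r^3 := by
      rw [← hr23]
      exact Real.rpow_le_rpow h1.le (by linarith [ht.1]) (by norm_num)
    have h3 : (0:ℝ) ≤ (-t) ^ ((3:ℝ)/2) := Real.rpow_nonneg h1.le _
    rw [Real.norm_eq_abs, abs_mul, abs_of_nonneg h3]
    exact mul_le_mul h2 (hWb t ht) (abs_nonneg _) (by positivity)
  have hIntIoo : IntegrableOn g (Set.Ioo (-(r^2):ℝ) 0) := by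
    apply hbdd V hVmeas
    intro t ht
    have htm : t ∈ Set.Ioo (-1:ℝ) 0 := ⟨by linarith [ht.1], ht.2⟩
    rw [abs_of_nonneg (hVnonneg t htm)]
    exact Vbound t ht
  have hII : IntervalIntegrable g volume (-(r^2)) 0 := by
    rw [intervalIntegrable_iff_integrableOn_Ioc_of_le (by linarith)]
    exact hIntIoo.congr_set_ae Ioo_ae_eq_Ioc.symm
  have hle1 : -(r^2) ≤ -(r^2)/Real.exp 1 := by
    rw [le_div_iff₀ he0]
    have h := mul_le_mul_of_nonneg_left he1.le hr2.le
    linarith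
  have hle2 : -(r^2)/Real.exp 1 ≤ (0:ℝ) := by
    rw [div_nonpos_iff]; exact Or.inr ⟨by linarith, he0.le⟩
  have hII1 : IntervalIntegrable g volume (-(r^2)) (-(r^2)/Real.exp 1) :=
    hII.mono_set (by
      rw [Set.uIcc_of_le (by linarith : -(r^2) ≤ (0:ℝ)), Set.uIcc_of_le hle1]
      exact Set.Icc_subset_Icc le_rfl hle2)
  have hII2 : IntervalIntegrable g volume (-(r^2)/Real.exp 1) 0 :=
    hII.mono_set (by
      rw [Set.uIcc_of_le (by linarith : -(r^2) ≤ (0:ℝ)), Set.uIcc_of_le hle2]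
      exact Set.Icc_subset_Icc hle1 le_rfl)
  have hsplit : (∫ t in (-(r^2))..0, g t)
      = (∫ t in (-(r^2))..(-(r^2)/Real.exp 1), g t) + ∫ t in (-(r^2)/Real.exp 1)..0, g t :=
    (intervalIntegral.integral_add_adjacent_intervals hII1 hII2).symm
  -- the base piece
  have hIc : IntervalIntegrable (fun t => (-t) ^ ((3:ℝ)/2) * V (-r^2)) volume
      (-(r^2)) (-(r^2)/Real.exp 1) := by
    have h1 := hbdd (fun _ => V (-r^2)) measurable_const
      (fun t _ => by rw [abs_of_nonneg hK0])
    have h2 : IntervalIntegrable (fun t => (-t) ^ ((3:ℝ)/2) * V (-r^2)) volume (-(r^2)) 0 :=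
      (intervalIntegrable_iff_integrableOn_Ioc_of_le (by linarith)).mpr
        (h1.congr_set_ae Ioo_ae_eq_Ioc.symm)
    exact h2.mono_set (by
      rw [Set.uIcc_of_le (by linarith : -(r^2) ≤ (0:ℝ)), Set.uIcc_of_le hle1]
      exact Set.Icc_subset_Icc le_rfl hle2)
  have hB1 : (∫ t in (-(r^2))..(-(r^2)/Real.exp 1), g t)
      ≤ ∫ t in (-(r^2))..(-(r^2)/Real.exp 1), (-t) ^ ((3:ℝ)/2) * V (-r^2) := by
    apply intervalIntegral.integral_mono_on hle1 hII1 hIc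
    intro x hx
    have hx0 : x < 0 := lt_of_le_of_lt hx.2 (by
      rw [div_neg_iff]; exact Or.inr ⟨by nlinarith, he0⟩)
    have hVx : V x ≤ V (-r^2) := by
      rcases eq_or_lt_of_le hx.1 with h | h
      · rw [← h]
      · exact Vbound x ⟨h, hx0⟩
    exact mul_le_mul_of_nonneg_left hVx (Real.rpow_nonneg (by linarith) _)
  have hval : (∫ t in (-(r^2))..(-(r^2)/Real.exp 1), (-t) ^ ((3:ℝ)/2))
      = (2/5) * r^5 * (1 - (Real.exp (5/2))⁻¹) := by
    rw [intervalIntegral.integral_comp_neg (fun u => u ^ ((3:ℝ)/2))]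
    rw [integral_rpow (Or.inl (by norm_num : (-1:ℝ) < 3/2))]
    have h2 : -(-(r^2)/Real.exp 1) = r^2/Real.exp 1 := by ring
    have h1 : -(-(r^2)) = r^2 := by ring
    rw [h1, h2]
    have h3 : ((3:ℝ)/2 + 1) = (5:ℝ)/2 := by norm_num
    rw [h3]
    have h4 : ((r^2/Real.exp 1:ℝ))^((5:ℝ)/2) = r^5 * (Real.exp (5/2))⁻¹ := by
      rw [Real.div_rpow hr2.le he0.le, hr25, Real.exp_one_rpow, div_eq_mul_inv]
    rw [h4, hr25]
    ring
  have hB : (∫ t in (-(r^2))..(-(r^2)/Real.exp 1), g t)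
      ≤ (2/5) * r^5 * V (-r^2) * (1 - (Real.exp (5/2))⁻¹) := by
    calc (∫ t in (-(r^2))..(-(r^2)/Real.exp 1), g t)
        ≤ ∫ t in (-(r^2))..(-(r^2)/Real.exp 1), (-t) ^ ((3:ℝ)/2) * V (-r^2) := hB1
      _ = (∫ t in (-(r^2))..(-(r^2)/Real.exp 1), (-t) ^ ((3:ℝ)/2)) * V (-r^2) :=
          intervalIntegral.integral_mul_const _ _
      _ = (2/5) * r^5 * V (-r^2) * (1 - (Real.exp (5/2))⁻¹) := by rw [hval]; ring
  -- the rescaled piece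
  have hWm2 : Measurable (fun t : ℝ => V (t / Real.exp 1)) :=
    hVmeas.comp (measurable_id.div_const _)
  have hIb2 : IntervalIntegrable (fun t => (-t) ^ ((3:ℝ)/2) * V (t / Real.exp 1)) volume
      (-(r^2)) 0 := by
    have hb : ∀ t ∈ Set.Ioo (-(r^2):ℝ) 0, |V (t / Real.exp 1)| ≤ V (-r^2) := by
      intro t ht
      have hd1 : t / Real.exp 1 < 0 := div_neg_of_neg_of_pos ht.2 he0
      have hd2 : -(r^2) < t / Real.exp 1 := by
        rw [lt_div_iff₀ he0]
        nlinarith [ht.1]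
      have hdm : t / Real.exp 1 ∈ Set.Ioo (-1:ℝ) 0 := ⟨by linarith, hd1⟩
      rw [abs_of_nonneg (hVnonneg _ hdm)]
      exact Vbound _ ⟨hd2, hd1⟩
    have h1 := hbdd (fun t => V (t / Real.exp 1)) hWm2 hb
    exact (intervalIntegrable_iff_integrableOn_Ioc_of_le (by linarith)).mpr
      (h1.congr_set_ae Ioo_ae_eq_Ioc.symm)
  have hmono2 : (∫ t in (-(r^2))..0, (-t) ^ ((3:ℝ)/2) * V (t / Real.exp 1))
      ≤ ∫ t in (-(r^2))..0, (1-ξ) * ((-t) ^ ((3:ℝ)/2) * V t) := by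
    apply intervalIntegral.integral_mono_on (by linarith) hIb2 (hII.const_mul _)
    intro x hx
    rcases hx.2.eq_or_lt with h0 | h0
    · rw [h0]
      simp [hg, Real.zero_rpow (by norm_num : ((3:ℝ)/2) ≠ 0)]
    · have hxm : x ∈ Set.Ioo (-1:ℝ) 0 := ⟨by linarith [hx.1], h0⟩
      have hdx := hdecay x hxm
      have h3 : (0:ℝ) ≤ (-x) ^ ((3:ℝ)/2) := Real.rpow_nonneg (by linarith) _
      calc (-x) ^ ((3:ℝ)/2) * V (x / Real.exp 1)
          ≤ (-x) ^ ((3:ℝ)/2) * ((1-ξ) * V x) := mul_le_mul_of_nonneg_left hdx h3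
        _ = (1-ξ) * ((-x) ^ ((3:ℝ)/2) * V x) := by ring
  have hconst2 : (Real.exp 1)⁻¹ * ((Real.exp 1)⁻¹) ^ ((3:ℝ)/2) = (Real.exp (5/2))⁻¹ := by
    rw [Real.inv_rpow he0.le, Real.exp_one_rpow, ← mul_inv, ← Real.exp_add]
    norm_num
  have hTeq : (∫ t in (-(r^2)/Real.exp 1)..0, g t)
      = (Real.exp 1)⁻¹ * ∫ s in (-(r^2))..0, g (s / Real.exp 1) := by
    rw [intervalIntegral.integral_comp_div (a := -(r^2)) (b := 0) (f := g) (ne_of_gt he0)]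
    rw [zero_div, smul_eq_mul, ← mul_assoc, inv_mul_cancel₀ (ne_of_gt he0), one_mul]
  have hcongr : (∫ s in (-(r^2))..0, g (s / Real.exp 1))
      = ((Real.exp 1)⁻¹) ^ ((3:ℝ)/2)
        * ∫ s in (-(r^2))..0, (-s) ^ ((3:ℝ)/2) * V (s / Real.exp 1) := by
    rw [← intervalIntegral.integral_const_mul]
    apply intervalIntegral.integral_congr
    intro s hs
    have hs' : s ∈ Set.Icc (-(r^2)) (0:ℝ) := by
      rwa [Set.uIcc_of_le (by linarith : -(r^2) ≤ (0:ℝ))] at hs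
    have hns : (0:ℝ) ≤ -s := by linarith [hs'.2]
    show (-(s / Real.exp 1)) ^ ((3:ℝ)/2) * V (s / Real.exp 1) = _
    have hrw : -(s / Real.exp 1) = (-s) * (Real.exp 1)⁻¹ := by ring
    rw [hrw, Real.mul_rpow hns hinv0.le]
    ring
  have hT : (∫ t in (-(r^2)/Real.exp 1)..0, g t)
      ≤ (Real.exp (5/2))⁻¹ * ((1-ξ) * ∫ t in (-(r^2))..0, g t) := by
    rw [hTeq, hcongr]
    have hX : (∫ s in (-(r^2))..0, (-s) ^ ((3:ℝ)/2) * V (s / Real.exp 1))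
        ≤ (1-ξ) * ∫ t in (-(r^2))..0, g t := by
      calc (∫ s in (-(r^2))..0, (-s) ^ ((3:ℝ)/2) * V (s / Real.exp 1))
          ≤ ∫ t in (-(r^2))..0, (1-ξ) * ((-t) ^ ((3:ℝ)/2) * V t) := hmono2
        _ = (1-ξ) * ∫ t in (-(r^2))..0, g t := intervalIntegral.integral_const_mul _ _
    calc (Real.exp 1)⁻¹ * (((Real.exp 1)⁻¹) ^ ((3:ℝ)/2)
            * ∫ s in (-(r^2))..0, (-s) ^ ((3:ℝ)/2) * V (s / Real.exp 1))
        = ((Real.exp 1)⁻¹ * ((Real.exp 1)⁻¹) ^ ((3:ℝ)/2))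
            * ∫ s in (-(r^2))..0, (-s) ^ ((3:ℝ)/2) * V (s / Real.exp 1) := by ring
      _ ≤ ((Real.exp 1)⁻¹ * ((Real.exp 1)⁻¹) ^ ((3:ℝ)/2))
            * ((1-ξ) * ∫ t in (-(r^2))..0, g t) :=
          mul_le_mul_of_nonneg_left hX (by positivity)
      _ = (Real.exp (5/2))⁻¹ * ((1-ξ) * ∫ t in (-(r^2))..0, g t) := by rw [hconst2]
  -- combine
  have hE0 : (0:ℝ) < Real.exp (5/2) := Real.exp_pos _
  have hE1 : (1:ℝ) < Real.exp (5/2) := by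
    rw [← Real.exp_zero]
    exact Real.exp_lt_exp.mpr (by norm_num)
  have hcomb : (∫ t in (-(r^2))..0, g t)
      ≤ (2/5) * r^5 * V (-r^2) * (1 - (Real.exp (5/2))⁻¹)
        + (Real.exp (5/2))⁻¹ * ((1-ξ) * ∫ t in (-(r^2))..0, g t) := by
    have h := add_le_add hB hT
    rw [← hsplit] at h
    exact h
  set I := ∫ t in (-(r^2))..0, g t with hIdef
  set C := (2/5) * r^5 * V (-r^2) with hCdef
  set E := Real.exp (5/2) with hEdef
  have hEne : E ≠ 0 := ne_of_gt hE0
  have he1' : E * (C * (1 - E⁻¹) + E⁻¹ * ((1-ξ) * I)) = C * (E - 1) + (1-ξ) * I := by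
    field_simp
  have h := mul_le_mul_of_nonneg_left hcomb hE0.le
  rw [he1'] at h
  have hstep : (E - 1 + ξ) * I ≤ C * (E - 1) := by
    have hr' : (E - 1 + ξ) * I = E * I - (1-ξ) * I := by ring
    rw [hr']
    linarith
  have hdpos : (0:ℝ) < E - 1 + ξ := by linarith
  have hfinal : I ≤ C * (E - 1) / (E - 1 + ξ) := by
    rw [le_div_iff₀ hdpos]
    linarith [mul_comm I (E - 1 + ξ)]
  have hne : Real.exp (5/2) + ξ - 1 ≠ 0 := by
    rw [hEdef] at hdpos
    intro hcon
    rw [show Real.exp (5/2) + ξ - 1 = Real.exp (5/2) - 1 + ξ from by ring] at hcon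
    linarith
  rw [hη]
  have hgoal : (∫ t in Set.Ioo (-r^2) (0:ℝ), g t) = I := by
    rw [hIdef, intervalIntegral.integral_of_le (by linarith : -(r^2) ≤ (0:ℝ)),
      integral_Ioc_eq_integral_Ioo]
  calc (∫ t in Set.Ioo (-r^2) (0:ℝ), g t) = I := hgoal
    _ ≤ C * (E - 1) / (E - 1 + ξ) := hfinal
    _ = (1 - ξ / (Real.exp (5/2) + ξ - 1)) / (5/2) * r^5 * V (-r^2) := by
        rw [hCdef, hEdef]
        have hne2 : Real.exp (5/2) - 1 + ξ ≠ 0 := ne_of_gt hdpos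
        rw [show Real.exp (5/2) + ξ - 1 = Real.exp (5/2) - 1 + ξ from by ring, one_sub_div hne2]
        ring
end
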